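/- If a t-norm T is general pseudo-homogeneous for F, then T is continuous if and only if F is continuous. -/

import Mathlib

open Set Filter Topology

def IsTnorm (T : ℝ → ℝ → ℝ) : Prop :=
  (∀ x ∈ Set.Icc (0:ℝ) 1, ∀ y ∈ Set.Icc (0:ℝ) 1, T x y ∈ Set.Icc (0:ℝ) 1) ∧
  (∀ x ∈ Set.Icc (0:ℝ) 1, ∀ y ∈ Set.Icc (0:ℝ) 1, T x y = T y x) ∧
  (∀ x ∈ Set.Icc (0:ℝ) 1, ∀ y ∈ Set.Icc (0:ℝ) 1, ∀ z ∈ Set.Icc (0:ℝ) 1,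
      T x (T y z) = T (T x y) z) ∧
  (∀ x ∈ Set.Icc (0:ℝ) 1, ∀ y ∈ Set.Icc (0:ℝ) 1, ∀ z ∈ Set.Icc (0:ℝ) 1,
      y ≤ z → T x y ≤ T x z) ∧
  (∀ x ∈ Set.Icc (0:ℝ) 1, T x 1 = x)

def IsGPH (T F : ℝ → ℝ → ℝ) : Prop :=
  ∀ lam ∈ Set.Icc (0:ℝ) 1, ∀ x ∈ Set.Icc (0:ℝ) 1, ∀ y ∈ Set.Icc (0:ℝ) 1,
    T (lam * x) (lam * y) = F lam (T x y)

noncomputable def TD : ℝ → ℝ → ℝ := fun x y => if max x y = 1 then min x y else 0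

theorem continuity_iff (T F : ℝ → ℝ → ℝ) (hT : IsTnorm T)
    (hF : ∀ x ∈ Set.Icc (0:ℝ) 1, ∀ y ∈ Set.Icc (0:ℝ) 1, F x y ∈ Set.Icc (0:ℝ) 1)
    (h : IsGPH T F) :
    ContinuousOn (fun p : ℝ × ℝ => T p.1 p.2) (Set.Icc (0:ℝ) 1 ×ˢ Set.Icc (0:ℝ) 1) ↔
    ContinuousOn (fun p : ℝ × ℝ => F p.1 p.2) (Set.Icc (0:ℝ) 1 ×ˢ Set.Icc (0:ℝ) 1) := by
  obtain ⟨hrange, hcomm, hassoc, hmono, hone⟩ := hT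
  have h01 : (1:ℝ) ∈ Set.Icc (0:ℝ) 1 := ⟨zero_le_one, le_refl _⟩
  have hTone : ∀ y ∈ Set.Icc (0:ℝ) 1, T 1 y = y := fun y hy => by
    rw [hcomm 1 h01 y hy, hone y hy]
  -- key representation of T via F
  have key : ∀ a ∈ Set.Icc (0:ℝ) 1, ∀ b ∈ Set.Icc (0:ℝ) 1, 0 < max a b →
      T a b = F (max a b) (min a b / max a b) := by
    intro a ha b hb hm
    have hmIcc : max a b ∈ Set.Icc (0:ℝ) 1 := ⟨hm.le, max_le ha.2 hb.2⟩
    have hnIcc : min a b / max a b ∈ Set.Icc (0:ℝ) 1 :=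
      ⟨div_nonneg (le_min ha.1 hb.1) hm.le, div_le_one_of_le₀ min_le_max hm.le⟩
    have hh := h (max a b) hmIcc 1 h01 (min a b / max a b) hnIcc
    rw [mul_one, mul_div_cancel₀ _ hm.ne', hTone _ hnIcc] at hh
    rcases le_total a b with hab | hab
    · rw [max_eq_right hab, min_eq_left hab] at hh ⊢
      rw [hcomm a ha b hb]; exact hh
    · rw [max_eq_left hab, min_eq_right hab] at hh ⊢; exact hh
  constructor
  · intro hTc
    have hmaps : Set.MapsTo (fun p : ℝ × ℝ => (p.1 * p.2, p.1))
        (Set.Icc (0:ℝ) 1 ×ˢ Set.Icc (0:ℝ) 1) (Set.Icc (0:ℝ) 1 ×ˢ Set.Icc (0:ℝ) 1) := by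
      intro p hp
      refine ⟨⟨mul_nonneg hp.1.1 hp.2.1, mul_le_one₀ hp.1.2 hp.2.1 hp.2.2⟩, hp.1⟩
    refine ContinuousOn.congr
      (hTc.comp ((continuous_fst.mul continuous_snd).prodMk continuous_fst).continuousOn hmaps) ?_
    intro p hp
    have hh := h p.1 hp.1 p.2 hp.2 1 h01
    rw [mul_one, hone p.2 hp.2] at hh
    exact hh.symm
  · intro hFc
    intro p hp
    rcases eq_or_lt_of_le (le_max_of_le_left hp.1.1 : (0:ℝ) ≤ max p.1 p.2) with hp0 | hp0
    · -- p = (0,0)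
      have h0 : (0:ℝ) ∈ Set.Icc (0:ℝ) 1 := ⟨le_refl _, zero_le_one⟩
      have h1 : p.1 = 0 := le_antisymm (le_of_le_of_eq (le_max_left _ _) hp0.symm) hp.1.1
      have hT00 : T p.1 p.2 = 0 := by
        have h2 : p.2 = 0 := le_antisymm (le_of_le_of_eq (le_max_right _ _) hp0.symm) hp.2.1
        rw [h1, h2]
        refine le_antisymm ?_ (hrange 0 h0 0 h0).1
        have hle := hmono 0 h0 0 h0 1 h01 zero_le_one
        rwa [hone 0 h0] at hle
      unfold ContinuousWithinAt
      have hval : (fun p : ℝ × ℝ => T p.1 p.2) p = 0 := hT00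
      rw [hval]
      refine tendsto_of_tendsto_of_tendsto_of_le_of_le' (h := fun q : ℝ × ℝ => q.1) tendsto_const_nhds ?_ ?_ ?_
      · have ht : Tendsto (fun q : ℝ × ℝ => q.1)
            (𝓝[Set.Icc (0:ℝ) 1 ×ˢ Set.Icc (0:ℝ) 1] p) (𝓝 p.1) :=
          continuousAt_fst.mono_left nhdsWithin_le_nhds
        rwa [h1] at ht
      · filter_upwards [self_mem_nhdsWithin] with q hq
        exact (hrange q.1 hq.1 q.2 hq.2).1
      · filter_upwards [self_mem_nhdsWithin] with q hq
        have hle := hmono q.1 hq.1 q.2 hq.2 1 h01 hq.2.2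
        rwa [hone q.1 hq.1] at hle
    · -- max > 0
      have hU : {q : ℝ × ℝ | 0 < max q.1 q.2} ∈ 𝓝 p := by
        have : IsOpen {q : ℝ × ℝ | 0 < max q.1 q.2} :=
          isOpen_lt continuous_const (continuous_fst.max continuous_snd)
        exact this.mem_nhds hp0
      rw [← continuousWithinAt_inter hU]
      set s := (Set.Icc (0:ℝ) 1 ×ˢ Set.Icc (0:ℝ) 1) ∩ {q : ℝ × ℝ | 0 < max q.1 q.2} with hs
      have hg : ContinuousWithinAt
          (fun q : ℝ × ℝ => ((max q.1 q.2, min q.1 q.2 / max q.1 q.2) : ℝ × ℝ)) s p := by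
        apply ContinuousAt.continuousWithinAt
        exact ((continuous_fst.max continuous_snd).continuousAt).prodMk
          (((continuous_fst.min continuous_snd).continuousAt).div
            ((continuous_fst.max continuous_snd).continuousAt) hp0.ne')
      have hmaps : Set.MapsTo (fun q : ℝ × ℝ => ((max q.1 q.2, min q.1 q.2 / max q.1 q.2) : ℝ × ℝ))
          s (Set.Icc (0:ℝ) 1 ×ˢ Set.Icc (0:ℝ) 1) := by
        rintro q ⟨hq, hq0⟩
        exact ⟨⟨le_of_lt hq0, max_le hq.1.2 hq.2.2⟩,
          ⟨div_nonneg (le_min hq.1.1 hq.2.1) (le_of_lt hq0),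
            div_le_one_of_le₀ min_le_max (le_of_lt hq0)⟩⟩
      have hgp : ((max p.1 p.2, min p.1 p.2 / max p.1 p.2) : ℝ × ℝ) ∈
          (Set.Icc (0:ℝ) 1 ×ˢ Set.Icc (0:ℝ) 1) := hmaps ⟨hp, hp0⟩
      have hcomp : ContinuousWithinAt
          (fun q : ℝ × ℝ => F (max q.1 q.2) (min q.1 q.2 / max q.1 q.2)) s p :=
        ContinuousWithinAt.comp (g := fun r : ℝ × ℝ => F r.1 r.2)
          (f := fun q : ℝ × ℝ => ((max q.1 q.2, min q.1 q.2 / max q.1 q.2) : ℝ × ℝ))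
          (hFc _ hgp) hg hmaps
      refine hcomp.congr ?_ ?_
      · rintro q ⟨hq, hq0⟩
        exact key q.1 hq.1 q.2 hq.2 hq0
      · exact key p.1 hp.1 p.2 hp.2 hp0
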